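/- Let X = EuclideanSpace ℝ (Fin n), let G be a subgroup of the isometry group of X, and let H be a normal subgroup of G. Then the scissors congruence group P(X, G) is isomorphic to the coinvariants of the induced action of the quotient group G/H on P(X, H); that is, P(X, G) ≅ H_0(G/H, P(X, H)), the quotient of P(X, H) by the subgroup generated by all elements x - gH • x for x ∈ P(X, H) and gH ∈ G/H, where the action of G/H on P(X, H) is the well-defined action induced by g • [P] = [g · P]. -/

import Mathlib

open MeasureTheory

/-- `n`-dimensional Euclidean space. -/
abbrev Euc (n : ℕ) : Type := EuclideanSpace ℝ (Fin n)

/-- A simplex in `Euc n` is the convex hull of `n+1` points. -/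
def IsSimplex {n : ℕ} (s : Set (Euc n)) : Prop :=
  ∃ v : Fin (n + 1) → Euc n, s = convexHull ℝ (Set.range v)

/-- A polytope in `Euc n` is a finite union of simplices. -/
def IsPolytope {n : ℕ} (s : Set (Euc n)) : Prop :=
  ∃ (k : ℕ) (t : Fin k → Set (Euc n)), (∀ i, IsSimplex (t i)) ∧ s = ⋃ i, t i

/-- The type of polytopes of `Euc n`. -/
def Polytope (n : ℕ) : Type := {s : Set (Euc n) // IsPolytope s}

/-- The subgroup of relations defining the scissors congruence group `P(X, G)`:
it is generated by the elements `[P] - [g ⬝ P]` for polytopes `P` and `g ∈ G`, and the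
elements `[P ∪ P'] - [P] - [P']` for polytopes `P, P'` whose intersection has measure
zero. -/
def scissorsRelations (n : ℕ) (G : Subgroup (Euc n ≃ᵢ Euc n)) :
    AddSubgroup (FreeAbelianGroup (Polytope n)) :=
  AddSubgroup.closure
    ({x | ∃ (P P' : Polytope n) (g : Euc n ≃ᵢ Euc n), g ∈ G ∧ P'.1 = g '' P.1 ∧
        x = FreeAbelianGroup.of P - FreeAbelianGroup.of P'} ∪
      {x | ∃ P P' Q : Polytope n, Q.1 = P.1 ∪ P'.1 ∧ volume (P.1 ∩ P'.1) = 0 ∧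
        x = FreeAbelianGroup.of Q - FreeAbelianGroup.of P - FreeAbelianGroup.of P'})

/-- The scissors congruence group `P(Euc n, G)`: the free abelian group on the polytopes
of `Euc n`, modulo the relations `[P] = [g ⬝ P]` for `g ∈ G` and `[P ∪ P'] = [P] + [P']`
for polytopes intersecting in measure zero. -/
def SCGroup (n : ℕ) (G : Subgroup (Euc n ≃ᵢ Euc n)) : Type :=
  FreeAbelianGroup (Polytope n) ⧸ scissorsRelations n G

noncomputable instance (n : ℕ) (G : Subgroup (Euc n ≃ᵢ Euc n)) :
    AddCommGroup (SCGroup n G) :=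
  inferInstanceAs (AddCommGroup (FreeAbelianGroup (Polytope n) ⧸ scissorsRelations n G))

/-- The class of a polytope in the scissors congruence group. -/
def SCGroup.mk {n : ℕ} {G : Subgroup (Euc n ≃ᵢ Euc n)} (P : Polytope n) : SCGroup n G :=
  QuotientAddGroup.mk (FreeAbelianGroup.of P)

namespace SCAux

variable {n : ℕ}

lemma isPolytope_image (g : Euc n ≃ᵢ Euc n) {s : Set (Euc n)} (hs : IsPolytope s) :
    IsPolytope (g '' s) := by
  obtain ⟨k, t, ht, rfl⟩ := hs
  refine ⟨k, fun i => g '' t i, fun i => ?_, by rw [Set.image_iUnion]⟩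
  obtain ⟨v, hv⟩ := ht i
  refine ⟨fun j => g (v j), ?_⟩
  have h : ⇑g '' (convexHull ℝ (Set.range v)) = convexHull ℝ (⇑g '' Set.range v) :=
    g.toRealAffineIsometryEquiv.toAffineMap.image_convexHull (Set.range v)
  show ⇑g '' t i = _
  rw [hv, h, ← Set.range_comp]
  rfl

lemma volume_image (g : Euc n ≃ᵢ Euc n) (s : Set (Euc n)) : volume (g '' s) = volume s := by
  have hmp : ∀ f : Euc n ≃ᵢ Euc n, MeasurePreserving f volume volume := by
    intro f
    have h1 := f.toRealLinearIsometryEquiv.measurePreserving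
    have h2 := measurePreserving_add_right (volume : Measure (Euc n)) (f 0)
    have h3 : (fun x => f.toRealLinearIsometryEquiv x + f 0) = f := by
      funext x
      rw [f.toRealLinearIsometryEquiv_apply, sub_add_cancel]
    have h4 := h2.comp h1
    have h5 : ((fun x => x + f 0) ∘ ⇑f.toRealLinearIsometryEquiv) = ⇑f := by
      funext x; exact congrFun h3 x
    rwa [h5] at h4
  have himg : g '' s = g.symm ⁻¹' s := by
    ext x
    constructor
    · rintro ⟨y, hy, rfl⟩; simpa using hy
    · intro hx; exact ⟨g.symm x, hx, by simp⟩
  rw [himg]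
  exact (hmp g.symm).measure_preimage_emb g.symm.toHomeomorph.measurableEmbedding s

/-- Image of a polytope under an isometry. -/
def pmap (g : Euc n ≃ᵢ Euc n) (P : Polytope n) : Polytope n :=
  ⟨g '' P.1, isPolytope_image g P.2⟩

lemma pmap_mul (g g' : Euc n ≃ᵢ Euc n) (P : Polytope n) :
    pmap (g * g') P = pmap g (pmap g' P) := by
  apply Subtype.ext
  show ⇑(g * g') '' P.1 = ⇑g '' (⇑g' '' P.1)
  rw [IsometryEquiv.coe_mul, Set.image_comp]

lemma pmap_one (P : Polytope n) : pmap (1 : Euc n ≃ᵢ Euc n) P = P := by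
  apply Subtype.ext
  show ⇑(1 : Euc n ≃ᵢ Euc n) '' P.1 = P.1
  rw [IsometryEquiv.coe_one, Set.image_id]

/-- The induced map on the free abelian group. -/
def Fmap (g : Euc n ≃ᵢ Euc n) :
    FreeAbelianGroup (Polytope n) →+ FreeAbelianGroup (Polytope n) :=
  FreeAbelianGroup.map (pmap g)

/-- Two elements of a scissors congruence group represented by polytopes related by a
relation are equal. -/
lemma sc_mk_eq_mk {K : Subgroup (Euc n ≃ᵢ Euc n)} {P P' : Polytope n}
    (h : FreeAbelianGroup.of P - FreeAbelianGroup.of P' ∈ scissorsRelations n K) :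
    (SCGroup.mk P : SCGroup n K) = SCGroup.mk P' := by
  show (QuotientAddGroup.mk (FreeAbelianGroup.of P) :
    FreeAbelianGroup (Polytope n) ⧸ scissorsRelations n K) =
    QuotientAddGroup.mk (FreeAbelianGroup.of P')
  rw [QuotientAddGroup.eq]
  have h2 := neg_mem h
  rw [neg_sub, sub_eq_neg_add] at h2
  exact h2

lemma sc_mk_eq_zero {K : Subgroup (Euc n ≃ᵢ Euc n)} {x : FreeAbelianGroup (Polytope n)}
    (h : x ∈ scissorsRelations n K) :
    (QuotientAddGroup.mk x : SCGroup n K) = 0 :=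
  (QuotientAddGroup.eq_zero_iff x).mpr h

variable (n) in
lemma fmap_rel (G : Subgroup (Euc n ≃ᵢ Euc n)) (H : Subgroup G) [H.Normal] (g : G) :
    scissorsRelations n (H.map G.subtype) ≤
      (scissorsRelations n (H.map G.subtype)).comap (Fmap (g : Euc n ≃ᵢ Euc n)) := by
  conv_lhs => rw [scissorsRelations]
  refine (AddSubgroup.closure_le _).mpr ?_
  rintro x (⟨P, P', h, hh, hP', rfl⟩ | ⟨P, P', Q, hQ, hvol, rfl⟩)
  · obtain ⟨h₀, hh₀, rfl⟩ := hh
    refine AddSubgroup.mem_comap.mpr ?_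
    have he : Fmap (g : Euc n ≃ᵢ Euc n)
        (FreeAbelianGroup.of P - FreeAbelianGroup.of P') =
        FreeAbelianGroup.of (pmap (g : Euc n ≃ᵢ Euc n) P) -
        FreeAbelianGroup.of (pmap (g : Euc n ≃ᵢ Euc n) P') := by
      rw [map_sub, Fmap, FreeAbelianGroup.map_of_apply, FreeAbelianGroup.map_of_apply]
    rw [he]
    apply AddSubgroup.subset_closure
    left
    refine ⟨pmap (g : Euc n ≃ᵢ Euc n) P, pmap (g : Euc n ≃ᵢ Euc n) P',
      ((g * h₀ * g⁻¹ : G) : Euc n ≃ᵢ Euc n),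
      ⟨g * h₀ * g⁻¹, Subgroup.Normal.conj_mem ‹H.Normal› h₀ hh₀ g, rfl⟩, ?_, rfl⟩
    have hfun : (⇑((g * h₀ * g⁻¹ : G) : Euc n ≃ᵢ Euc n) ∘ ⇑(g : Euc n ≃ᵢ Euc n)) =
        (⇑(g : Euc n ≃ᵢ Euc n) ∘ ⇑(G.subtype h₀)) := by
      funext y
      show ((g : Euc n ≃ᵢ Euc n) * (h₀ : Euc n ≃ᵢ Euc n) * (g : Euc n ≃ᵢ Euc n)⁻¹)
          ((g : Euc n ≃ᵢ Euc n) y) = (g : Euc n ≃ᵢ Euc n) ((h₀ : Euc n ≃ᵢ Euc n) y)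
      rw [IsometryEquiv.mul_apply, IsometryEquiv.mul_apply]
      exact congrArg _ (congrArg _ ((g : Euc n ≃ᵢ Euc n).symm_apply_apply y))
    show ⇑(g : Euc n ≃ᵢ Euc n) '' P'.1 =
      ⇑((g * h₀ * g⁻¹ : G) : Euc n ≃ᵢ Euc n) '' (⇑(g : Euc n ≃ᵢ Euc n) '' P.1)
    rw [hP', ← Set.image_comp, ← Set.image_comp, hfun]
  · refine AddSubgroup.mem_comap.mpr ?_
    have he : Fmap (g : Euc n ≃ᵢ Euc n)
        (FreeAbelianGroup.of Q - FreeAbelianGroup.of P - FreeAbelianGroup.of P') =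
        FreeAbelianGroup.of (pmap (g : Euc n ≃ᵢ Euc n) Q) -
        FreeAbelianGroup.of (pmap (g : Euc n ≃ᵢ Euc n) P) -
        FreeAbelianGroup.of (pmap (g : Euc n ≃ᵢ Euc n) P') := by
      rw [map_sub, map_sub, Fmap, FreeAbelianGroup.map_of_apply,
        FreeAbelianGroup.map_of_apply, FreeAbelianGroup.map_of_apply]
    rw [he]
    apply AddSubgroup.subset_closure
    right
    refine ⟨pmap (g : Euc n ≃ᵢ Euc n) P, pmap (g : Euc n ≃ᵢ Euc n) P',
      pmap (g : Euc n ≃ᵢ Euc n) Q, ?_, ?_, rfl⟩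
    · show ⇑(g : Euc n ≃ᵢ Euc n) '' Q.1 = _
      rw [hQ, Set.image_union]; rfl
    · show volume (⇑(g : Euc n ≃ᵢ Euc n) '' P.1 ∩ ⇑(g : Euc n ≃ᵢ Euc n) '' P'.1) = 0
      rw [← Set.image_inter (g : Euc n ≃ᵢ Euc n).injective, volume_image, hvol]

variable (n) in
/-- The action of `g ∈ G` on `P(X, H)`. -/
noncomputable def θ (G : Subgroup (Euc n ≃ᵢ Euc n)) (H : Subgroup G) [H.Normal] (g : G) :
    SCGroup n (H.map G.subtype) →+ SCGroup n (H.map G.subtype) :=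
  QuotientAddGroup.map _ _ (Fmap (g : Euc n ≃ᵢ Euc n)) (fmap_rel n G H g)

lemma θ_mk (G : Subgroup (Euc n ≃ᵢ Euc n)) (H : Subgroup G) [H.Normal] (g : G)
    (P : Polytope n) :
    θ n G H g (SCGroup.mk P) = SCGroup.mk (pmap (g : Euc n ≃ᵢ Euc n) P) := by
  have h1 : θ n G H g (SCGroup.mk P) =
      QuotientAddGroup.mk (Fmap (g : Euc n ≃ᵢ Euc n) (FreeAbelianGroup.of P)) := rfl
  rw [h1, Fmap, FreeAbelianGroup.map_of_apply]
  rfl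

/-- Extensionality for homomorphisms out of a scissors congruence group. -/
lemma sc_hom_ext {K : Subgroup (Euc n ≃ᵢ Euc n)} {A : Type*} [AddCommGroup A]
    {f f' : SCGroup n K →+ A}
    (h : ∀ P : Polytope n, f (SCGroup.mk P) = f' (SCGroup.mk P)) : f = f' := by
  refine QuotientAddGroup.addMonoidHom_ext _ ?_
  exact FreeAbelianGroup.lift_ext _ _ h

variable (n) in
/-- The action of `G` on `P(X, H)` by additive automorphisms. -/
noncomputable def actG (G : Subgroup (Euc n ≃ᵢ Euc n)) (H : Subgroup G) [H.Normal] :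
    G →* Multiplicative (AddAut (SCGroup n (H.map G.subtype))) := by
  have hcomp : ∀ g g' : G, (θ n G H g).comp (θ n G H g') = θ n G H (g * g') := by
    intro g g'
    refine sc_hom_ext fun P => ?_
    show θ n G H g (θ n G H g' (SCGroup.mk P)) = θ n G H (g * g') (SCGroup.mk P)
    rw [θ_mk, θ_mk, θ_mk,
      show ((g * g' : G) : Euc n ≃ᵢ Euc n) = (g : Euc n ≃ᵢ Euc n) * (g' : Euc n ≃ᵢ Euc n)
        from rfl, pmap_mul]
  have hone : θ n G H 1 = AddMonoidHom.id _ := by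
    refine sc_hom_ext fun P => ?_
    rw [θ_mk]
    show SCGroup.mk (pmap ((1 : G) : Euc n ≃ᵢ Euc n) P) = SCGroup.mk P
    rw [show ((1 : G) : Euc n ≃ᵢ Euc n) = 1 from rfl, pmap_one]
  refine MonoidHom.mk' (fun g => Multiplicative.ofAdd (AddMonoidHom.toAddEquiv (θ n G H g) (θ n G H g⁻¹)
    (by rw [hcomp, inv_mul_cancel, hone]) (by rw [hcomp, mul_inv_cancel, hone]))) ?_
  intro g g'
  refine AddEquiv.ext fun x => ?_
  show θ n G H (g * g') x = θ n G H g (θ n G H g' x)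
  rw [← hcomp]
  rfl

lemma actG_apply (G : Subgroup (Euc n ≃ᵢ Euc n)) (H : Subgroup G) [H.Normal] (g : G)
    (x : SCGroup n (H.map G.subtype)) : Multiplicative.toAdd (actG n G H g) x = θ n G H g x := rfl

variable (n) in
/-- The action of `G ⧸ H` on `P(X, H)`. -/
noncomputable def actQ (G : Subgroup (Euc n ≃ᵢ Euc n)) (H : Subgroup G) [H.Normal] :
    G ⧸ H →* Multiplicative (AddAut (SCGroup n (H.map G.subtype))) := by
  refine QuotientGroup.lift H (actG n G H) ?_
  intro h hh
  refine AddEquiv.ext fun x => ?_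
  show θ n G H h x = x
  have hid : θ n G H h = AddMonoidHom.id _ := by
    refine sc_hom_ext fun P => ?_
    rw [θ_mk]
    show SCGroup.mk (pmap ((h : G) : Euc n ≃ᵢ Euc n) P) = SCGroup.mk P
    refine (sc_mk_eq_mk ?_).symm
    apply AddSubgroup.subset_closure
    left
    exact ⟨P, pmap ((h : G) : Euc n ≃ᵢ Euc n) P, ((h : G) : Euc n ≃ᵢ Euc n),
      ⟨h, hh, rfl⟩, rfl, rfl⟩
  rw [hid]
  rfl

lemma actQ_mk (G : Subgroup (Euc n ≃ᵢ Euc n)) (H : Subgroup G) [H.Normal] (g : G)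
    (P : Polytope n) :
    Multiplicative.toAdd (actQ n G H (QuotientGroup.mk g)) (SCGroup.mk P) =
      SCGroup.mk (pmap (g : Euc n ≃ᵢ Euc n) P) := by
  show Multiplicative.toAdd (actG n G H g) (SCGroup.mk P) = _
  exact θ_mk G H g P

end SCAux

open SCAux in
theorem scGroup_iso_coinvariants_of_normal (n : ℕ) (G : Subgroup (Euc n ≃ᵢ Euc n))
    (H : Subgroup G) [H.Normal] :
    ∃ act : G ⧸ H →* Multiplicative (AddAut (SCGroup n (H.map G.subtype))),
      (∀ (g : G) (P P' : Polytope n), P'.1 = (g : Euc n ≃ᵢ Euc n) '' P.1 →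
        Multiplicative.toAdd (act (QuotientGroup.mk g)) (SCGroup.mk P) = SCGroup.mk P') ∧
      Nonempty (SCGroup n G ≃+
        SCGroup n (H.map G.subtype) ⧸ AddSubgroup.closure
          {x : SCGroup n (H.map G.subtype) |
            ∃ (q : G ⧸ H) (y : SCGroup n (H.map G.subtype)), x = y - Multiplicative.toAdd (act q) y}) := by
  refine ⟨actQ n G H, ?_, ?_⟩
  · intro g P P' hP'
    have hPP : P' = pmap (g : Euc n ≃ᵢ Euc n) P := Subtype.ext hP'
    rw [hPP, actQ_mk]
  · set C : AddSubgroup (SCGroup n (H.map G.subtype)) := AddSubgroup.closure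
      {x : SCGroup n (H.map G.subtype) |
        ∃ (q : G ⧸ H) (y : SCGroup n (H.map G.subtype)), x = y - Multiplicative.toAdd (actQ n G H q) y} with hC
    set Fφ : FreeAbelianGroup (Polytope n) →+ SCGroup n (H.map G.subtype) ⧸ C :=
      (QuotientAddGroup.mk' C).comp
        ((QuotientAddGroup.mk' (scissorsRelations n (H.map G.subtype))) :
          FreeAbelianGroup (Polytope n) →+ SCGroup n (H.map G.subtype)) with hFφ
    have hFφ_ker : ∀ x ∈ scissorsRelations n G, Fφ x = 0 := by
      intro x hx
      have hle : scissorsRelations n G ≤ Fφ.ker := by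
        rw [scissorsRelations]
        refine (AddSubgroup.closure_le _).mpr ?_
        rintro x (⟨P, P', g, hg, hP', rfl⟩ | ⟨P, P', Q, hQ, hvol, rfl⟩)
        · have hPP : P' = pmap g P := Subtype.ext hP'
          show (QuotientAddGroup.mk' C)
            ((SCGroup.mk P : SCGroup n (H.map G.subtype)) - SCGroup.mk P') = 0
          have hy : (SCGroup.mk P' : SCGroup n (H.map G.subtype)) =
              Multiplicative.toAdd (actQ n G H (QuotientGroup.mk (⟨g, hg⟩ : G))) (SCGroup.mk P) := by
            rw [actQ_mk]
            exact congrArg SCGroup.mk hPP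
          rw [hy, QuotientAddGroup.mk'_apply, QuotientAddGroup.eq_zero_iff]
          exact AddSubgroup.subset_closure
            ⟨QuotientGroup.mk (⟨g, hg⟩ : G), SCGroup.mk P, rfl⟩
        · show (QuotientAddGroup.mk' C)
            ((QuotientAddGroup.mk (FreeAbelianGroup.of Q - FreeAbelianGroup.of P -
              FreeAbelianGroup.of P') : SCGroup n (H.map G.subtype))) = 0
          exact (congrArg _ (sc_mk_eq_zero (AddSubgroup.subset_closure
            (Or.inr ⟨P, P', Q, hQ, hvol, rfl⟩)))).trans (map_zero _)
      exact hle hx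
    set φ : SCGroup n G →+ SCGroup n (H.map G.subtype) ⧸ C :=
      QuotientAddGroup.lift (scissorsRelations n G) Fφ hFφ_ker with hφ
    have hle' : scissorsRelations n (H.map G.subtype) ≤
        (scissorsRelations n G).comap
          (AddMonoidHom.id (FreeAbelianGroup (Polytope n))) := by
      conv_lhs => rw [scissorsRelations]
      refine (AddSubgroup.closure_le _).mpr ?_
      rintro x (⟨P, P', g, hg, hP', rfl⟩ | ⟨P, P', Q, hQ, hvol, rfl⟩)
      · obtain ⟨g₀, _, rfl⟩ := hg
        exact AddSubgroup.subset_closure (Or.inl ⟨P, P', g₀, g₀.2, hP', rfl⟩)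
      · exact AddSubgroup.subset_closure (Or.inr ⟨P, P', Q, hQ, hvol, rfl⟩)
    set π : SCGroup n (H.map G.subtype) →+ SCGroup n G :=
      QuotientAddGroup.map _ _ (AddMonoidHom.id _) hle' with hπ
    have hπ_mk : ∀ P : Polytope n, π (SCGroup.mk P) = SCGroup.mk P := fun P => rfl
    have hπθ : ∀ g : G, π.comp (θ n G H g) = π := by
      intro g
      refine sc_hom_ext fun P => ?_
      show π (θ n G H g (SCGroup.mk P)) = π (SCGroup.mk P)
      rw [θ_mk, hπ_mk, hπ_mk]
      refine (sc_mk_eq_mk ?_).symm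
      apply AddSubgroup.subset_closure
      exact Or.inl ⟨P, pmap (g : Euc n ≃ᵢ Euc n) P, (g : Euc n ≃ᵢ Euc n), g.2, rfl, rfl⟩
    have hπC : ∀ x ∈ C, π x = 0 := by
      intro x hx
      have hle'' : C ≤ π.ker := by
        rw [hC]
        refine (AddSubgroup.closure_le _).mpr ?_
        rintro x ⟨q, y, rfl⟩
        show π (y - Multiplicative.toAdd (actQ n G H q) y) = 0
        induction q using QuotientGroup.induction_on with
        | H g =>
          have hq : Multiplicative.toAdd (actQ n G H (QuotientGroup.mk g)) y = θ n G H g y := rfl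
          rw [map_sub, hq, ← AddMonoidHom.comp_apply, hπθ, sub_self]
      exact hle'' hx
    set ψ : SCGroup n (H.map G.subtype) ⧸ C →+ SCGroup n G :=
      QuotientAddGroup.lift C π hπC with hψ
    have h1 : ψ.comp φ = AddMonoidHom.id (SCGroup n G) := by
      refine sc_hom_ext fun P => ?_
      rfl
    have h2 : φ.comp ψ = AddMonoidHom.id (SCGroup n (H.map G.subtype) ⧸ C) := by
      refine QuotientAddGroup.addMonoidHom_ext C ?_
      refine sc_hom_ext fun P => ?_
      rfl
    exact ⟨AddMonoidHom.toAddEquiv φ ψ h1 h2⟩
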